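/- For every n ≥ 0 there exist nonnegative integers s_{2n,i,j} and s_{2n+1,i,j} such that, in the polynomial ring ℤ[x,y,z], D_J^{2n}(x) = Σ_{i,j ≥ 0} s_{2n,i,j} x^{2i+1} y^{2j} z^{2n−2i−2j} and D_J^{2n+1}(x) = Σ_{i,j ≥ 0} s_{2n+1,i,j} x^{2i} y^{2j+1} z^{2n−2i−2j+1}. In particular, every coefficient of D_J^n(x) is nonnegative and D_J^{2n}(x) lies in x·ℤ[x²,y²,z²] while D_J^{2n+1}(x) lies in yz·ℤ[x²,y²,z²]. -/

import Mathlib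

open Finset MvPolynomial

/-- The derivation `D_J` on `ℤ[x,y,z]` with `D_J(x) = yz`, `D_J(y) = xz`, `D_J(z) = xy`
(variables `x = X 0`, `y = X 1`, `z = X 2`). -/
noncomputable def DJ : Derivation ℤ (MvPolynomial (Fin 3) ℤ) (MvPolynomial (Fin 3) ℤ) :=
  MvPolynomial.mkDerivation ℤ ![X 1 * X 2, X 0 * X 2, X 0 * X 1]

/-- Auxiliary: the monomial `x^a y^b z^c`. -/
noncomputable def mono (a b c : ℕ) : MvPolynomial (Fin 3) ℤ := X 0 ^ a * X 1 ^ b * X 2 ^ c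

lemma DJ_X0 : DJ (X 0) = X 1 * X 2 := by simp [DJ, mkDerivation_X]
lemma DJ_X1 : DJ (X 1) = X 0 * X 2 := by simp [DJ, mkDerivation_X]
lemma DJ_X2 : DJ (X 2) = X 0 * X 1 := by simp [DJ, mkDerivation_X]

lemma DJ_mono (a b c : ℕ) :
    DJ (mono a b c) = a • mono (a-1) (b+1) (c+1) + b • mono (a+1) (b-1) (c+1)
      + c • mono (a+1) (b+1) (c-1) := by
  simp only [mono, Derivation.leibniz, Derivation.leibniz_pow, DJ_X0, DJ_X1, DJ_X2,
    smul_eq_mul, nsmul_eq_mul, pow_succ]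
  ring

/-- Generators for the even steps. -/
def G₀ (n : ℕ) : Set (MvPolynomial (Fin 3) ℤ) :=
  {p | ∃ i j, i + j ≤ n ∧ p = mono (2*i+1) (2*j) (2*n-2*i-2*j)}

/-- Generators for the odd steps. -/
def G₁ (n : ℕ) : Set (MvPolynomial (Fin 3) ℤ) :=
  {p | ∃ i j, i + j ≤ n ∧ p = mono (2*i) (2*j+1) (2*n-2*i-2*j+1)}

lemma L1 (n : ℕ) {P} (h : P ∈ AddSubmonoid.closure (G₀ n)) :
    DJ P ∈ AddSubmonoid.closure (G₁ n) := by
  induction h using AddSubmonoid.closure_induction with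
  | mem p hp =>
    obtain ⟨i, j, hij, rfl⟩ := hp
    rw [DJ_mono]
    refine add_mem (add_mem ?_ ?_) ?_
    · rw [show 2*i+1-1 = 2*i from by omega, show 2*n-2*i-2*j+1 = 2*n-2*i-2*j+1 from rfl]
      refine nsmul_mem (AddSubmonoid.subset_closure ?_) _; exact ⟨i, j, hij, rfl⟩
    · rcases j with _ | j'
      · simpa using zero_mem _
      · rw [show (2*(j'+1) : ℕ) - 1 = 2*j'+1 from by omega,
           show (2*i+1+1 : ℕ) = 2*(i+1) from by omega,
           show (2*n-2*i-2*(j'+1)+1 : ℕ) = 2*n-2*(i+1)-2*j'+1 from by omega]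
        refine nsmul_mem (AddSubmonoid.subset_closure ?_) _; exact ⟨i+1, j', by omega, rfl⟩
    · rcases hk : 2*n-2*i-2*j with _ | k
      · simpa using zero_mem _
      · rw [show (2*i+1+1 : ℕ) = 2*(i+1) from by omega,
           show (k+1 : ℕ) - 1 = 2*n-2*(i+1)-2*j+1 from by omega]
        refine nsmul_mem (AddSubmonoid.subset_closure ?_) _; exact ⟨i+1, j, by omega, rfl⟩
  | zero => simpa using zero_mem _
  | add x y hx hy ihx ihy => rw [map_add]; exact add_mem ihx ihy

lemma L2 (n : ℕ) {P} (h : P ∈ AddSubmonoid.closure (G₁ n)) :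
    DJ P ∈ AddSubmonoid.closure (G₀ (n+1)) := by
  induction h using AddSubmonoid.closure_induction with
  | mem p hp =>
    obtain ⟨i, j, hij, rfl⟩ := hp
    rw [DJ_mono]
    refine add_mem (add_mem ?_ ?_) ?_
    · rcases i with _ | i'
      · simpa using zero_mem _
      · rw [show (2*(i'+1) : ℕ) - 1 = 2*i'+1 from by omega,
           show (2*j+1+1 : ℕ) = 2*(j+1) from by omega,
           show (2*n-2*(i'+1)-2*j+1+1 : ℕ) = 2*(n+1)-2*i'-2*(j+1) from by omega]
        refine nsmul_mem (AddSubmonoid.subset_closure ?_) _; exact ⟨i', j+1, by omega, rfl⟩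
    · rw [show (2*j+1-1 : ℕ) = 2*j from rfl,
         show (2*n-2*i-2*j+1+1 : ℕ) = 2*(n+1)-2*i-2*j from by omega]
      refine nsmul_mem (AddSubmonoid.subset_closure ?_) _; exact ⟨i, j, by omega, rfl⟩
    · rw [show (2*j+1+1 : ℕ) = 2*(j+1) from by omega,
         show (2*n-2*i-2*j+1-1 : ℕ) = 2*(n+1)-2*i-2*(j+1) from by omega]
      refine nsmul_mem (AddSubmonoid.subset_closure ?_) _; exact ⟨i, j+1, by omega, rfl⟩
  | zero => simpa using zero_mem _
  | add x y hx hy ihx ihy => rw [map_add]; exact add_mem ihx ihy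

/-- Anything in the additive closure of the monomial family has a representation as a
double sum with nonnegative integer coefficients. -/
lemma repr_lemma (n : ℕ) (m : ℕ → ℕ → MvPolynomial (Fin 3) ℤ) {P : MvPolynomial (Fin 3) ℤ}
    (h : P ∈ AddSubmonoid.closure {p : MvPolynomial (Fin 3) ℤ | ∃ i j, i + j ≤ n ∧ p = m i j}) :
    ∃ s : ℕ → ℕ → ℕ,
      P = ∑ i ∈ Finset.range (n+1), ∑ j ∈ Finset.range (n+1-i), s i j • m i j := by
  induction h using AddSubmonoid.closure_induction with
  | mem p hp =>
    obtain ⟨i₀, j₀, hij, rfl⟩ := hp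
    refine ⟨fun a b => if a = i₀ ∧ b = j₀ then 1 else 0, ?_⟩
    symm
    rw [Finset.sum_eq_single i₀]
    · rw [Finset.sum_eq_single j₀]
      · simp
      · intro b _ hb; simp [hb]
      · intro hj; exact absurd (Finset.mem_range.2 (by omega)) hj
    · intro b _ hb; apply Finset.sum_eq_zero; intro c _; simp [hb]
    · intro hi; exact absurd (Finset.mem_range.2 (by omega)) hi
  | zero => exact ⟨fun _ _ => 0, by simp⟩
  | add x y hx hy ihx ihy =>
    obtain ⟨s, rfl⟩ := ihx
    obtain ⟨t, rfl⟩ := ihy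
    exact ⟨fun i j => s i j + t i j, by
      rw [← Finset.sum_add_distrib]
      exact Finset.sum_congr rfl fun i _ => by
        rw [← Finset.sum_add_distrib]
        exact Finset.sum_congr rfl fun j _ => (add_smul _ _ _).symm⟩

lemma key (n : ℕ) :
    (fun p => DJ p)^[2*n] (X 0) ∈ AddSubmonoid.closure (G₀ n) ∧
    (fun p => DJ p)^[2*n+1] (X 0) ∈ AddSubmonoid.closure (G₁ n) := by
  induction n with
  | zero =>
    constructor
    · simp only [Nat.mul_zero, Function.iterate_zero_apply]
      refine AddSubmonoid.subset_closure ?_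
      exact ⟨0, 0, le_refl 0, by simp [mono]⟩
    · simp only [Nat.mul_zero, Nat.zero_add, Function.iterate_one]
      refine AddSubmonoid.subset_closure ?_
      exact ⟨0, 0, le_refl 0, by rw [DJ_X0]; simp [mono]⟩
  | succ k ih =>
    have he : (fun p => DJ p)^[2*(k+1)] (X 0) ∈ AddSubmonoid.closure (G₀ (k+1)) := by
      rw [show 2*(k+1) = (2*k+1)+1 from by ring, Function.iterate_succ_apply']
      exact L2 k ih.2
    refine ⟨he, ?_⟩
    rw [Function.iterate_succ_apply']
    exact L1 (k+1) he

/-- For every `n ≥ 0` there are nonnegative integers `s_{2n,i,j}`, `s_{2n+1,i,j}` with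
`D_J^{2n}(x) = Σ_{i,j} s_{2n,i,j} x^{2i+1} y^{2j} z^{2n-2i-2j}` and
`D_J^{2n+1}(x) = Σ_{i,j} s_{2n+1,i,j} x^{2i} y^{2j+1} z^{2n-2i-2j+1}`.
(In particular all coefficients of `D_J^n(x)` are nonnegative, `D_J^{2n}(x) ∈ x·ℤ[x²,y²,z²]`
and `D_J^{2n+1}(x) ∈ yz·ℤ[x²,y²,z²]`.) -/
theorem stmt6 (n : ℕ) :
    ∃ s₀ s₁ : ℕ → ℕ → ℕ,
      ((fun p => DJ p)^[2 * n] (X 0) =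
        ∑ i ∈ Finset.range (n + 1), ∑ j ∈ Finset.range (n + 1 - i),
          (s₀ i j) • (X 0 ^ (2 * i + 1) * X 1 ^ (2 * j) *
            X 2 ^ (2 * n - 2 * i - 2 * j) : MvPolynomial (Fin 3) ℤ)) ∧
      ((fun p => DJ p)^[2 * n + 1] (X 0) =
        ∑ i ∈ Finset.range (n + 1), ∑ j ∈ Finset.range (n + 1 - i),
          (s₁ i j) • (X 0 ^ (2 * i) * X 1 ^ (2 * j + 1) *
            X 2 ^ (2 * n - 2 * i - 2 * j + 1) : MvPolynomial (Fin 3) ℤ)) := by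
  obtain ⟨h0, h1⟩ := key n
  obtain ⟨s₀, hs₀⟩ := repr_lemma n (fun i j => mono (2*i+1) (2*j) (2*n-2*i-2*j)) h0
  obtain ⟨s₁, hs₁⟩ := repr_lemma n (fun i j => mono (2*i) (2*j+1) (2*n-2*i-2*j+1)) h1
  exact ⟨s₀, s₁, hs₀, hs₁⟩
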